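/- If λ is a positive integer of the form λ = 2·4^s(2ℓ+1) for natural numbers s, ℓ, and λ = m² + n² with natural numbers m, n, then 2^s divides m, 2^s divides n, and both m/2^s and n/2^s are odd. -/

import Mathlib

theorem stmt1_aux (s : ℕ) : ∀ m n ℓ : ℕ, m ^ 2 + n ^ 2 = 2 * 4 ^ s * (2 * ℓ + 1) →
    2 ^ s ∣ m ∧ 2 ^ s ∣ n ∧ Odd (m / 2 ^ s) ∧ Odd (n / 2 ^ s) := by
  induction s with
  | zero =>
    intro m n ℓ h
    simp only [pow_zero, Nat.div_one, one_dvd, true_and]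
    rcases Nat.even_or_odd m with ⟨a, rfl⟩ | ⟨a, rfl⟩ <;>
      rcases Nat.even_or_odd n with ⟨b, rfl⟩ | ⟨b, rfl⟩
    · exfalso
      have h4 : 4 * (a * a) + 4 * (b * b) = 2 * 4 ^ 0 * (2 * ℓ + 1) := by rw [← h]; ring
      simp only [pow_zero] at h4
      generalize a * a = x at h4
      generalize b * b = y at h4
      omega
    · exfalso
      have h4 : 4 * (a * a) + (4 * (b * b) + 4 * b + 1) = 2 * 4 ^ 0 * (2 * ℓ + 1) := by
        rw [← h]; ring
      simp only [pow_zero] at h4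
      generalize a * a = x at h4
      generalize b * b = y at h4
      omega
    · exfalso
      have h4 : (4 * (a * a) + 4 * a + 1) + 4 * (b * b) = 2 * 4 ^ 0 * (2 * ℓ + 1) := by
        rw [← h]; ring
      simp only [pow_zero] at h4
      generalize a * a = x at h4
      generalize b * b = y at h4
      omega
    · exact ⟨⟨a, by ring⟩, ⟨b, by ring⟩⟩
  | succ s ih =>
    intro m n ℓ h
    have hme : Even m ∧ Even n := by
      rcases Nat.even_or_odd m with hm | ⟨a, rfl⟩
      · rcases Nat.even_or_odd n with hn | ⟨b, rfl⟩
        · exact ⟨hm, hn⟩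
        · exfalso
          obtain ⟨a, rfl⟩ := hm
          have h4 : 4 * (a * a) + (4 * (b * b) + 4 * b + 1)
              = 4 * (2 * 4 ^ s * (2 * ℓ + 1)) := by
            rw [show (4:ℕ) * (2 * 4 ^ s * (2 * ℓ + 1)) = 2 * 4 ^ (s+1) * (2 * ℓ + 1) from by ring, ← h]; ring
          generalize a * a = x at h4
          generalize b * b = y at h4
          generalize 2 * 4 ^ s * (2 * ℓ + 1) = z at h4
          omega
      · exfalso
        rcases Nat.even_or_odd n with ⟨b, rfl⟩ | ⟨b, rfl⟩
        · have h4 : (4 * (a * a) + 4 * a + 1) + 4 * (b * b)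
              = 4 * (2 * 4 ^ s * (2 * ℓ + 1)) := by
            rw [show (4:ℕ) * (2 * 4 ^ s * (2 * ℓ + 1)) = 2 * 4 ^ (s+1) * (2 * ℓ + 1) from by ring, ← h]; ring
          generalize a * a = x at h4
          generalize b * b = y at h4
          generalize 2 * 4 ^ s * (2 * ℓ + 1) = z at h4
          omega
        · have h4 : (4 * (a * a) + 4 * a + 1) + (4 * (b * b) + 4 * b + 1)
              = 4 * (2 * 4 ^ s * (2 * ℓ + 1)) := by
            rw [show (4:ℕ) * (2 * 4 ^ s * (2 * ℓ + 1)) = 2 * 4 ^ (s+1) * (2 * ℓ + 1) from by ring, ← h]; ring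
          generalize a * a = x at h4
          generalize b * b = y at h4
          generalize 2 * 4 ^ s * (2 * ℓ + 1) = z at h4
          omega
    obtain ⟨⟨a, rfl⟩, ⟨b, rfl⟩⟩ := hme
    have hab : a ^ 2 + b ^ 2 = 2 * 4 ^ s * (2 * ℓ + 1) := by
      have h4 : 4 * (a ^ 2 + b ^ 2) = 4 * (2 * 4 ^ s * (2 * ℓ + 1)) := by
            rw [show (4:ℕ) * (2 * 4 ^ s * (2 * ℓ + 1)) = 2 * 4 ^ (s+1) * (2 * ℓ + 1) from by ring, ← h]; ring
      omega
    obtain ⟨h1, h2, h3, h4⟩ := ih a b ℓ hab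
    obtain ⟨c, rfl⟩ := h1
    obtain ⟨d, rfl⟩ := h2
    have e1 : 2 ^ s * c + 2 ^ s * c = 2 ^ (s + 1) * c := by ring
    have e2 : 2 ^ s * d + 2 ^ s * d = 2 ^ (s + 1) * d := by ring
    rw [e1, e2]
    have hp : (0 : ℕ) < 2 ^ (s + 1) := Nat.pow_pos (by norm_num)
    have hp' : (0 : ℕ) < 2 ^ s := Nat.pow_pos (by norm_num)
    rw [Nat.mul_div_cancel_left _ hp, Nat.mul_div_cancel_left _ hp]
    rw [Nat.mul_div_cancel_left _ hp'] at h3 h4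
    exact ⟨Dvd.intro c rfl, Dvd.intro d rfl, h3, h4⟩

theorem stmt1 (m n s ℓ : ℕ) (h : m ^ 2 + n ^ 2 = 2 * 4 ^ s * (2 * ℓ + 1)) :
    2 ^ s ∣ m ∧ 2 ^ s ∣ n ∧ Odd (m / 2 ^ s) ∧ Odd (n / 2 ^ s) := by
  exact stmt1_aux s m n ℓ h
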